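/- arXiv:math-ph/0101014 — 2 statements merged into one kernel-verified Lean document; each statement's English description precedes it below -/
import Mathlib

section
/- Let D be the deterministic NSMM automaton on {0,1}^{ℤ²}, let ε ∈ (0,1], and let μ be any probability measure on {0,1}^{ℤ²} invariant for the stochastic automaton N_ε D. Then for every integer L ≥ 1, μ(1_{S_{(0,−L),L}}) ≥ μ(1_{Σ_L}) ≥ ε^{6L+1}, where Σ_L = {(i,0) : −3L ≤ i ≤ 3L}. -/
open MeasureTheory ENNReal

namespace CAPaper

/-- Majority of three Boolean values: `1` iff at least two of them are `1`. -/
def major (a b c : Bool) : Bool := (a && b) || ((a && c) || (b && c))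

/-- The deterministic NEC (North-East-Center) automaton on `{0,1}^{ℤ²}`. -/
def Dnec (x : ℤ × ℤ → Bool) : ℤ × ℤ → Bool :=
  fun p => major (x (p.1, p.2 + 1)) (x (p.1 + 1, p.2)) (x (p.1, p.2))

/-- The deterministic NSMM (North-South maximum of minima) automaton on `{0,1}^{ℤ²}`. -/
def Dnsmm (x : ℤ × ℤ → Bool) : ℤ × ℤ → Bool :=
  fun p => max (min (x (p.1, p.2)) (x (p.1 + 1, p.2)))
               (min (x (p.1, p.2 + 1)) (x (p.1 + 1, p.2 + 1)))

/-- Probability that, after the one-sided noise with parameter `ε` is applied to a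
configuration whose value at a given site is `xi`, that site carries the value `b`. -/
noncomputable def noiseProb (ε : ℝ) (xi b : Bool) : ℝ≥0∞ :=
  if xi then (if b then 1 else 0)
  else (if b then ENNReal.ofReal ε else ENNReal.ofReal (1 - ε))

/-- `ν` is the result of one step of the stochastic automaton `N_ε D` applied to `μ`
(first apply `D`, then independent one-sided noise at every site); since the noise measure
is a product measure, this is equivalent to specifying all cylinder probabilities of `ν`. -/
def IsStep {ι : Type*} (ε : ℝ) (D : (ι → Bool) → (ι → Bool)) (μ ν : Measure (ι → Bool)) : Prop :=
  ∀ (Λ : Finset ι) (b : ι → Bool),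
    ν {y | ∀ i ∈ Λ, y i = b i} = ∫⁻ x, ∏ i ∈ Λ, noiseProb ε (D x i) (b i) ∂μ

/-- `μ` is invariant for the stochastic automaton `N_ε D`. -/
def Invariant {ι : Type*} (ε : ℝ) (D : (ι → Bool) → (ι → Bool)) (μ : Measure (ι → Bool)) : Prop :=
  IsStep ε D μ μ

/-- The cylinder event: all sites of `Λ` carry the value 1. -/
def ones {ι : Type*} (Λ : Set ι) : Set (ι → Bool) := {x | ∀ i ∈ Λ, x i = true}

/-- The segment `Σ_L = {(i,0) : −3L ≤ i ≤ 3L}` of Example 2. -/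
def Seg (L : ℕ) : Set (ℤ × ℤ) := {p | p.2 = 0 ∧ -3 * (L : ℤ) ≤ p.1 ∧ p.1 ≤ 3 * L}

lemma measurable_Dnsmm_apply (i : ℤ × ℤ) :
    Measurable fun x : ℤ × ℤ → Bool => Dnsmm x i := by
  have g : Measurable fun q : Bool × Bool × Bool × Bool =>
      max (min q.1 q.2.1) (min q.2.2.1 q.2.2.2) := measurable_of_countable _
  have ht : Measurable fun x : ℤ × ℤ → Bool =>
      (x (i.1, i.2), x (i.1 + 1, i.2), x (i.1, i.2 + 1), x (i.1 + 1, i.2 + 1)) :=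
    (measurable_pi_apply _).prodMk ((measurable_pi_apply _).prodMk
      ((measurable_pi_apply _).prodMk (measurable_pi_apply _)))
  exact g.comp ht

lemma step_ge {ε : ℝ} {μ : Measure (ℤ × ℤ → Bool)} (hinv : Invariant ε Dnsmm μ)
    (Λ : Finset (ℤ × ℤ)) :
    μ {x | ∀ i ∈ Λ, Dnsmm x i = true} ≤ μ {y | ∀ i ∈ Λ, y i = true} := by
  have h := hinv Λ (fun _ => true)
  rw [h]
  have hm : MeasurableSet {x : ℤ × ℤ → Bool | ∀ i ∈ Λ, Dnsmm x i = true} := by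
    have : {x : ℤ × ℤ → Bool | ∀ i ∈ Λ, Dnsmm x i = true}
        = ⋂ i ∈ Λ, {x | Dnsmm x i = true} := by ext x; simp
    rw [this]
    exact MeasurableSet.biInter (Λ.countable_toSet) fun i _ =>
      (measurable_Dnsmm_apply i) (measurableSet_singleton true)
  calc μ {x | ∀ i ∈ Λ, Dnsmm x i = true}
      = ∫⁻ x, {x : ℤ × ℤ → Bool | ∀ i ∈ Λ, Dnsmm x i = true}.indicator 1 x ∂μ :=
        (lintegral_indicator_one hm).symm
    _ ≤ ∫⁻ x, ∏ i ∈ Λ, noiseProb ε (Dnsmm x i) true ∂μ := by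
        refine lintegral_mono fun x => ?_
        by_cases hx : x ∈ {x : ℤ × ℤ → Bool | ∀ i ∈ Λ, Dnsmm x i = true}
        · rw [Set.indicator_of_mem hx]
          have : ∏ i ∈ Λ, noiseProb ε (Dnsmm x i) true = 1 :=
            Finset.prod_eq_one fun i hi => by rw [hx i hi]; simp [noiseProb]
          simp [this]
        · rw [Set.indicator_of_notMem hx]; exact zero_le

lemma lower_bound {ε : ℝ} (hε : 0 < ε) (hε1 : ε ≤ 1) {μ : Measure (ℤ × ℤ → Bool)}
    [IsProbabilityMeasure μ] (hinv : Invariant ε Dnsmm μ) (Λ : Finset (ℤ × ℤ)) :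
    ENNReal.ofReal ε ^ Λ.card ≤ μ {y | ∀ i ∈ Λ, y i = true} := by
  have h := hinv Λ (fun _ => true)
  rw [h]
  calc ENNReal.ofReal ε ^ Λ.card
      = ∫⁻ _, ENNReal.ofReal ε ^ Λ.card ∂μ := by simp
    _ ≤ ∫⁻ x, ∏ i ∈ Λ, noiseProb ε (Dnsmm x i) true ∂μ := by
        refine lintegral_mono fun x => ?_
        rw [← Finset.prod_const]
        refine Finset.prod_le_prod' fun i _ => ?_
        cases hb : Dnsmm x i
        · simp [noiseProb]
        · simp [noiseProb, ofReal_le_one.mpr hε1]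


noncomputable def Rect (L k : ℕ) : Finset (ℤ × ℤ) :=
  (Finset.Icc (-3 * (L : ℤ)) (3 * L - k)) ×ˢ (Finset.Icc (-(k : ℤ)) 0)

lemma mem_Rect {L k : ℕ} {p : ℤ × ℤ} :
    p ∈ Rect L k ↔ (-3 * (L : ℤ) ≤ p.1 ∧ p.1 ≤ 3 * L - k) ∧ (-(k : ℤ) ≤ p.2 ∧ p.2 ≤ 0) := by
  simp [Rect, Finset.mem_product, Finset.mem_Icc]

lemma bmax_left {a b c d : Bool} (ha : a = true) (hb : b = true) :
    max (min a b) (min c d) = true := by subst ha hb; cases c <;> cases d <;> decide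

lemma bmax_right {a b c d : Bool} (hc : c = true) (hd : d = true) :
    max (min a b) (min c d) = true := by subst hc hd; cases a <;> cases b <;> decide

lemma growth (L k : ℕ) {x : ℤ × ℤ → Bool} (hx : ∀ i ∈ Rect L k, x i = true) :
    ∀ i ∈ Rect L (k + 1), Dnsmm x i = true := by
  rintro ⟨a, b⟩ hi
  rw [mem_Rect] at hi
  push_cast at hi
  have hD : Dnsmm x (a, b) = max (min (x (a, b)) (x (a + 1, b)))
      (min (x (a, b + 1)) (x (a + 1, b + 1))) := rfl
  rw [hD]
  by_cases hj : -(k : ℤ) ≤ b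
  · exact bmax_left (hx _ (mem_Rect.mpr (by push_cast; omega)))
      (hx _ (mem_Rect.mpr (by push_cast; omega)))
  · exact bmax_right (hx _ (mem_Rect.mpr (by push_cast; omega)))
      (hx _ (mem_Rect.mpr (by push_cast; omega)))

lemma ones_coe (Λ : Finset (ℤ × ℤ)) :
    ones (↑Λ : Set (ℤ × ℤ)) = {y : ℤ × ℤ → Bool | ∀ i ∈ Λ, y i = true} := by
  ext y; simp [ones]

lemma chain {ε : ℝ} {μ : Measure (ℤ × ℤ → Bool)} (hinv : Invariant ε Dnsmm μ)
    (L : ℕ) : ∀ k, μ (ones ↑(Rect L 0)) ≤ μ (ones ↑(Rect L k)) := by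
  intro k
  induction k with
  | zero => exact le_rfl
  | succ k ih =>
    refine ih.trans ?_
    rw [ones_coe, ones_coe]
    refine le_trans (measure_mono ?_) (step_ge hinv (Rect L (k + 1)))
    intro x hx
    exact growth L k (fun i hi => hx i hi)

/-- every invariant probability measure of the NSMM automaton with one-sided
noise `ε` satisfies `μ(1_{S_{(0,−L),L}}) ≥ μ(1_{Σ_L}) ≥ ε^{6L+1}`. -/
theorem stmt15 (ε : ℝ) (hε : 0 < ε) (hε1 : ε ≤ 1)
    (μ : Measure (ℤ × ℤ → Bool)) (hprob : IsProbabilityMeasure μ)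
    (hinv : Invariant ε Dnsmm μ) (L : ℕ) (hL : 1 ≤ L) :
    μ (ones (Seg L)) ≤
        μ (ones {p : ℤ × ℤ |
          Real.sqrt ((p.1 : ℝ) ^ 2 + ((p.2 : ℝ) + L) ^ 2) ≤ L}) ∧
      ENNReal.ofReal ε ^ (6 * L + 1) ≤ μ (ones (Seg L)) := by
  haveI := hprob
  have hseg : Seg L = ↑(Rect L 0) := by
    ext ⟨a, b⟩
    simp only [Seg, Set.mem_setOf_eq, Finset.coe_sort_coe, Finset.mem_coe, mem_Rect]
    push_cast
    omega
  have hL' : (1 : ℝ) ≤ (L : ℝ) := by exact_mod_cast hL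
  constructor
  · have hsub : {p : ℤ × ℤ | Real.sqrt ((p.1 : ℝ) ^ 2 + ((p.2 : ℝ) + L) ^ 2) ≤ L}
        ⊆ ↑(Rect L (2 * L)) := by
      rintro ⟨a, b⟩ hs
      simp only [Set.mem_setOf_eq] at hs
      have h0 : (0 : ℝ) ≤ (a : ℝ) ^ 2 + ((b : ℝ) + L) ^ 2 := by positivity
      have hA : (a : ℝ) ^ 2 + ((b : ℝ) + L) ^ 2 ≤ (L : ℝ) ^ 2 := by
        nlinarith [Real.sq_sqrt h0, Real.sqrt_nonneg ((a : ℝ) ^ 2 + ((b : ℝ) + L) ^ 2)]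
      have h1 : (a : ℝ) ≤ L := by nlinarith [sq_nonneg ((a : ℝ) - L), sq_nonneg ((b : ℝ) + L)]
      have h2 : -(L : ℝ) ≤ a := by nlinarith [sq_nonneg ((a : ℝ) + L), sq_nonneg ((b : ℝ) + L)]
      have h3 : (b : ℝ) ≤ 0 := by nlinarith [sq_nonneg (a : ℝ), sq_nonneg (b : ℝ)]
      have h4 : -(2 * (L : ℝ)) ≤ b := by nlinarith [sq_nonneg ((b : ℝ) + 2 * L), sq_nonneg (a : ℝ)]
      have i1 : (a : ℤ) ≤ (L : ℤ) := by exact_mod_cast h1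
      have i2 : -(L : ℤ) ≤ a := by exact_mod_cast h2
      have i3 : (b : ℤ) ≤ 0 := by exact_mod_cast h3
      have i4 : -(2 * (L : ℤ)) ≤ b := by exact_mod_cast h4
      simp only [Finset.mem_coe, mem_Rect]
      push_cast
      omega
    calc μ (ones (Seg L)) = μ (ones ↑(Rect L 0)) := by rw [hseg]
      _ ≤ μ (ones ↑(Rect L (2 * L))) := chain hinv L (2 * L)
      _ ≤ μ (ones {p : ℤ × ℤ | Real.sqrt ((p.1 : ℝ) ^ 2 + ((p.2 : ℝ) + L) ^ 2) ≤ L}) := by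
          refine measure_mono fun x hx i hi => hx i (hsub hi)
  · have hcard : (Rect L 0).card = 6 * L + 1 := by
      simp [Rect, Finset.card_product, Int.card_Icc]
      omega
    rw [hseg, ones_coe, ← hcard]
    exact lower_bound hε hε1 hinv (Rect L 0)

end CAPaper
end

section
/- Let d > a > 0 be integers and let f : {0,1}^{ℤ^d} → {0,1} be the transition function f(x) = min over (b_1,…,b_a) ∈ {0,1}^a of max over (b_{a+1},…,b_d) ∈ {0,1}^{d−a} of x(b_1,…,b_d), where (b_1,…,b_d) denotes the lattice point of ℤ^d with these coordinates. Then for every ε ∈ (0,1] there is a constant c > 0 such that every probability measure μ invariant for N_ε D_f satisfies μ(1_{S_{0,L}}) ≥ exp(−c·(L^a + 1)) for every integer L ≥ 0 (i.e., −ln μ(1_{S_{0,L}}) is bounded by a constant times L^a). -/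
open MeasureTheory ENNReal

namespace CAPaper

/-- Sites of the lattice `ℤ^d`. -/
abbrev Site (d : ℕ) := Fin d → ℤ

/-- Configurations `{0,1}^{ℤ^d}`, values in `Bool` (`false` = 0, `true` = 1). -/
abbrev Config (d : ℕ) := Site d → Bool

/-- Euclidean norm on `ℝ^d`. -/
noncomputable def enorm {d : ℕ} (v : Fin d → ℝ) : ℝ := Real.sqrt (∑ k, v k ^ 2)

/-- Euclidean scalar product on `ℝ^d`. -/
noncomputable def edot {d : ℕ} (u v : Fin d → ℝ) : ℝ := ∑ k, u k * v k

/-- The embedding `ℤ^d → ℝ^d`. -/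
def embed {d : ℕ} (i : Site d) : Fin d → ℝ := fun k => (i k : ℝ)

/-- Euclidean norm of a lattice point. -/
noncomputable def enormZ {d : ℕ} (i : Site d) : ℝ := enorm (embed i)

open Classical in
/-- `Conf S` is the configuration whose indicator is `S`. -/
noncomputable def Conf {d : ℕ} (S : Set (Site d)) : Config d :=
  fun i => if i ∈ S then true else false

/-- `f` is local with support `Δ`. -/
def IsLocal {d : ℕ} (f : Config d → Bool) (Δ : Finset (Site d)) : Prop :=
  ∀ x y : Config d, (∀ i ∈ Δ, x i = y i) → f x = f y

/-- `f` is monotonic. -/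
def Monotonic {d : ℕ} (f : Config d → Bool) : Prop :=
  ∀ x y : Config d, (∀ i, x i ≤ y i) → f x ≤ f y

/-- `f` is a standard transition function with support `Δ`. -/
def Standard {d : ℕ} (f : Config d → Bool) (Δ : Finset (Site d)) : Prop :=
  IsLocal f Δ ∧ Monotonic f ∧ ∃ x y : Config d, f x ≠ f y

/-- The deterministic cellular automaton `D_f`. -/
def Df {d : ℕ} (f : Config d → Bool) (x : Config d) : Config d :=
  fun i => f (fun j => x (i + j))

/-- The invariant configuration `x` attracts `D`. -/
def Attracts {d : ℕ} (D : Config d → Config d) (x : Config d) : Prop :=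
  D x = x ∧ ∀ y : Config d, {i | y i ≠ x i}.Finite → ∃ t : ℕ, D^[t] y = x

/-- `D_f` has velocity `V` in the direction `p`. -/
def HasVelocity {d : ℕ} (f : Config d → Bool) (p : Fin d → ℝ) (V : ℝ) : Prop :=
  ∀ C : ℝ, Df f (Conf {i | edot (embed i) p ≤ C}) = Conf {i | edot (embed i) p ≤ C + V}

/-- The lattice point of `ℤ^d` whose first `a` coordinates are given by the Boolean
vector `u` and whose last `d − a` coordinates are given by `v`. -/
def bpoint (d a : ℕ) (u : Fin a → Bool) (v : Fin (d - a) → Bool) : Site d :=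
  fun k => if h : (k : ℕ) < a then (if u ⟨k, h⟩ then 1 else 0)
    else (if v ⟨(k : ℕ) - a, by have := k.isLt; omega⟩ then 1 else 0)

/-- The transition function `f(x) = min_{b₁,…,b_a ∈ {0,1}} max_{b_{a+1},…,b_d ∈ {0,1}}
x(b₁,…,b_d)` of Note 2 of the paper. -/
noncomputable def fMinMax (d a : ℕ) : Config d → Bool := fun x =>
  (Finset.univ : Finset (Fin a → Bool)).inf fun u =>
    (Finset.univ : Finset (Fin (d - a) → Bool)).sup fun v => x (bpoint d a u v)

/- ----------------  auxiliary lemmas  ---------------- -/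

lemma finset_inf_bool {ι : Type*} (s : Finset ι) (f : ι → Bool) :
    s.inf f = true ↔ ∀ i ∈ s, f i = true := by
  simpa using Finset.inf_eq_top_iff f s

lemma finset_sup_bool {ι : Type*} (s : Finset ι) (f : ι → Bool) :
    s.sup f = true ↔ ∃ i ∈ s, f i = true := by
  induction s using Finset.cons_induction with
  | empty => simp
  | cons a s h ih => rw [Finset.sup_cons]; cases hfa : f a <;> simp [hfa, ih]

lemma fMinMax_eq_true (d a : ℕ) (x : Config d) :
    fMinMax d a x = true ↔
      ∀ u : Fin a → Bool, ∃ v : Fin (d - a) → Bool, x (bpoint d a u v) = true := by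
  unfold fMinMax
  rw [finset_inf_bool]
  simp [finset_sup_bool]

lemma measurableSet_ones {d : ℕ} (B : Set (Site d)) : MeasurableSet (ones B) := by
  have h : ones B = ⋂ i ∈ B, {x : Config d | x i = true} := by
    ext x; simp [ones]
  rw [h]
  refine MeasurableSet.biInter (Set.to_countable B) fun i _ => ?_
  have h2 : {x : Config d | x i = true} = (fun x : Config d => x i) ⁻¹' {true} := rfl
  rw [h2]
  exact (measurable_pi_apply i) (measurableSet_singleton true)

/-- One step of the invariant measure: paying `ε` on `Γ`, provided ones on `B`
forces (under the deterministic automaton) ones on `Λ \ Γ`. -/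
lemma stepA {d : ℕ} (f : Config d → Bool) (ε : ℝ) (hε1 : ε ≤ 1)
    (μ : Measure (Config d)) (hμ : Invariant ε (Df f) μ)
    (Λ Γ : Finset (Site d)) (hΓΛ : Γ ⊆ Λ) (B : Set (Site d))
    (h : ∀ x : Config d, (∀ i ∈ B, x i = true) → ∀ j ∈ Λ, j ∉ Γ → Df f x j = true) :
    (ENNReal.ofReal ε) ^ Γ.card * μ (ones B) ≤ μ (ones (↑Λ : Set (Site d))) := by
  have hinv := hμ Λ (fun _ => true)
  have hset : ones (↑Λ : Set (Site d)) = {y : Config d | ∀ i ∈ Λ, y i = (fun _ => true) i} := by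
    ext y; simp [ones]
  rw [hset, hinv]
  have hbound : ∀ x : Config d,
      (ones B).indicator (fun _ => (ENNReal.ofReal ε) ^ Γ.card) x ≤
      ∏ i ∈ Λ, noiseProb ε (Df f x i) ((fun _ => true) i) := by
    intro x
    by_cases hx : x ∈ ones B
    · rw [Set.indicator_of_mem hx]
      calc (ENNReal.ofReal ε) ^ Γ.card
          = ∏ i ∈ Λ, (if i ∈ Γ then ENNReal.ofReal ε else 1) := by
            rw [Finset.prod_ite_mem, Finset.inter_eq_right.mpr hΓΛ, Finset.prod_const]
        _ ≤ ∏ i ∈ Λ, noiseProb ε (Df f x i) ((fun _ => true) i) := by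
            apply Finset.prod_le_prod' 
            intro i hi
            by_cases hiΓ : i ∈ Γ
            · simp only [hiΓ, if_true]
              cases hb : Df f x i <;>
                simp [noiseProb, hb, ENNReal.ofReal_le_one.mpr hε1]
            · have hD : Df f x i = true := h x hx i hi hiΓ
              simp [noiseProb, hD, hiΓ]
    · rw [Set.indicator_of_notMem hx]; exact zero_le
  calc (ENNReal.ofReal ε) ^ Γ.card * μ (ones B)
      = ∫⁻ x, (ones B).indicator (fun _ => (ENNReal.ofReal ε) ^ Γ.card) x ∂μ := by
        rw [lintegral_indicator (measurableSet_ones B), setLIntegral_const]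
    _ ≤ _ := lintegral_mono hbound

/-- Geometric erosion lemma for boxes under the min-max automaton. -/
lemma erode (d a : ℕ) (had : a < d) (m M : Fin d → ℤ)
    (hmM : ∀ k : Fin d, a ≤ (k : ℕ) → m k ≤ M k)
    (x : Config d) (hx : ∀ i : Site d, (∀ k, m k ≤ i k ∧ i k ≤ M k) → x i = true)
    (j : Site d)
    (hj : ∀ k : Fin d, ((if (k : ℕ) < a then m k else m k - 1) ≤ j k ∧
          j k ≤ (if (k : ℕ) < a then M k - 1 else M k))) :
    Df (fMinMax d a) x j = true := by
  show fMinMax d a (fun i => x (j + i)) = true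
  rw [fMinMax_eq_true]
  intro u
  set J : ℕ → ℤ := fun nk => if h : nk < d then j ⟨nk, h⟩ else 0 with hJdef
  set Mm : ℕ → ℤ := fun nk => if h : nk < d then m ⟨nk, h⟩ else 0 with hMdef
  refine ⟨fun q => decide (J (a + (q : ℕ)) < Mm (a + (q : ℕ))), ?_⟩
  show x (j + bpoint d a u _) = true
  apply hx
  intro k
  rw [Pi.add_apply]
  have hJk : J (k : ℕ) = j k := by rw [hJdef]; simp [k.isLt]
  have hMk : Mm (k : ℕ) = m k := by rw [hMdef]; simp [k.isLt]
  by_cases hk : (k : ℕ) < a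
  · have hb : bpoint d a u (fun q => decide (J (a + (q : ℕ)) < Mm (a + (q : ℕ)))) k
        = if u ⟨k, hk⟩ then 1 else 0 := by
      simp only [bpoint]; rw [dif_pos hk]
    have hjk := hj k
    rw [if_pos hk, if_pos hk] at hjk
    rw [hb]
    split_ifs <;> omega
  · have hak : a ≤ (k : ℕ) := le_of_not_gt hk
    have harith : a + ((k : ℕ) - a) = (k : ℕ) := by omega
    have hb : bpoint d a u (fun q => decide (J (a + (q : ℕ)) < Mm (a + (q : ℕ)))) k
        = if J (k : ℕ) < Mm (k : ℕ) then 1 else 0 := by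
      simp only [bpoint]; rw [dif_neg hk]
      show (if decide (J (a + ((k : ℕ) - a)) < Mm (a + ((k : ℕ) - a))) = true
          then (1 : ℤ) else 0) = _
      rw [harith]
      simp
    have hjk := hj k
    rw [if_neg hk, if_neg hk] at hjk
    have hmk := hmM k hak
    rw [hb, hJk, hMk]
    split_ifs <;> omega

/-- Lower box corner at time `t` (times run `1,…,2L+1`). -/
def boxLo (a L t : ℕ) {d : ℕ} : Fin d → ℤ :=
  fun k => if (k : ℕ) < a then -(L : ℤ) else (L : ℤ) + 1 - t

/-- Upper box corner at time `t`. -/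
def boxHi (a L t : ℕ) {d : ℕ} : Fin d → ℤ :=
  fun k => if (k : ℕ) < a then 3 * (L : ℤ) + 1 - t else (L : ℤ)

lemma nat_ineq (a L : ℕ) : (4 * L + 1) ^ a ≤ 8 ^ a * (L ^ a + 1) := by
  rcases Nat.eq_zero_or_pos L with hL | hL
  · subst hL
    have h1 : (4 * 0 + 1) ^ a = 1 := by norm_num
    rw [h1]
    exact Nat.mul_pos (pow_pos (by norm_num) a) (Nat.succ_pos _)
  · calc (4 * L + 1) ^ a ≤ (8 * L) ^ a := by
          apply Nat.pow_le_pow_left; omega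
      _ = 8 ^ a * L ^ a := by rw [mul_pow]
      _ ≤ 8 ^ a * (L ^ a + 1) := by
          apply Nat.mul_le_mul_left; omega

/-- Note 2 of the paper: for the min-max automaton, every invariant
probability measure of `N_ε D_f` satisfies `−ln μ(1_{S_{0,L}}) ≺ L^a`. -/
theorem stmt19 (d a : ℕ) (ha : 0 < a) (had : a < d)
    (ε : ℝ) (hε : 0 < ε) (hε1 : ε ≤ 1) :
    ∃ c : ℝ, 0 < c ∧
      ∀ μ : Measure (Config d), IsProbabilityMeasure μ →
        Invariant ε (Df (fMinMax d a)) μ →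
        ∀ L : ℕ,
          ENNReal.ofReal (Real.exp (-(c * ((L : ℝ) ^ a + 1)))) ≤
            μ (ones {i : Site d | enormZ i ≤ (L : ℝ)}) := by
  have hlog : 0 ≤ -Real.log ε := by
    rw [neg_nonneg]; exact Real.log_nonpos hε.le hε1
  refine ⟨8 ^ a * (-Real.log ε) + 1, by positivity, ?_⟩
  intro μ hprob hinv L
  set n : ℕ := (Finset.Icc (boxLo a L 1 (d := d)) (boxHi a L 1)).card with hn
  -- the inductive chain of boxes
  have key : ∀ s : ℕ, (ENNReal.ofReal ε) ^ n ≤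
      μ (ones (↑(Finset.Icc (boxLo a L (s + 1) (d := d)) (boxHi a L (s + 1))) : Set (Site d))) := by
    intro s
    induction s with
    | zero =>
      have h0 := stepA (fMinMax d a) ε hε1 μ hinv
        (Finset.Icc (boxLo a L 1) (boxHi a L 1)) (Finset.Icc (boxLo a L 1) (boxHi a L 1))
        subset_rfl ∅ (by intro x _ j hj hnj; exact absurd hj hnj)
      have hones : ones (∅ : Set (Site d)) = Set.univ := by ext x; simp [ones]
      rw [hones, measure_univ, mul_one] at h0
      exact h0
    | succ s ih =>
      have hgeom : ∀ x : Config d,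
          (∀ i ∈ (↑(Finset.Icc (boxLo a L (s + 1) (d := d)) (boxHi a L (s + 1))) :
            Set (Site d)), x i = true) →
          ∀ j ∈ Finset.Icc (boxLo a L (s + 2) (d := d)) (boxHi a L (s + 2)),
            j ∉ (∅ : Finset (Site d)) → Df (fMinMax d a) x j = true := by
        intro x hx j hj _
        apply erode d a had (boxLo a L (s + 1)) (boxHi a L (s + 1))
        · intro k hk
          simp only [boxLo, boxHi, if_neg (not_lt.mpr hk)]
          push_cast; omega
        · intro i hi
          apply hx
          simp only [Finset.coe_Icc, Set.mem_Icc]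
          exact ⟨fun k => (hi k).1, fun k => (hi k).2⟩
        · rw [Finset.mem_Icc] at hj
          intro k
          have h1 := hj.1 k
          have h2 := hj.2 k
          by_cases hk : (k : ℕ) < a <;>
            simp only [boxLo, boxHi, if_pos, if_neg, hk, if_true, if_false] at h1 h2 ⊢ <;>
            push_cast at h1 h2 ⊢ <;> omega
      have hstep := stepA (fMinMax d a) ε hε1 μ hinv
        (Finset.Icc (boxLo a L (s + 2)) (boxHi a L (s + 2))) ∅ (Finset.empty_subset _)
        (↑(Finset.Icc (boxLo a L (s + 1) (d := d)) (boxHi a L (s + 1))))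
        hgeom
      rw [Finset.card_empty, pow_zero, one_mul] at hstep
      exact le_trans ih hstep
  -- the final box contains the ball
  have hfinal := key (2 * L)
  have hsub : {i : Site d | enormZ i ≤ (L : ℝ)} ⊆
      (↑(Finset.Icc (boxLo a L (2 * L + 1) (d := d)) (boxHi a L (2 * L + 1))) :
        Set (Site d)) := by
    intro i hi
    simp only [Set.mem_setOf_eq] at hi
    have hcoord : ∀ k : Fin d, |(i k : ℝ)| ≤ (L : ℝ) := by
      intro k
      have h1 : ((i k : ℝ)) ^ 2 ≤ ∑ k', ((i k' : ℝ)) ^ 2 :=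
        Finset.single_le_sum (fun k' _ => sq_nonneg ((i k' : ℝ))) (Finset.mem_univ k)
      have h2 : Real.sqrt (((i k : ℝ)) ^ 2) ≤ Real.sqrt (∑ k', ((i k' : ℝ)) ^ 2) :=
        Real.sqrt_le_sqrt h1
      rw [Real.sqrt_sq_eq_abs] at h2
      exact h2.trans hi
    have hcoordZ : ∀ k : Fin d, -(L : ℤ) ≤ i k ∧ i k ≤ (L : ℤ) := by
      intro k
      have h3 := abs_le.mp (hcoord k)
      exact ⟨by exact_mod_cast h3.1, by exact_mod_cast h3.2⟩
    simp only [Finset.coe_Icc, Set.mem_Icc]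
    refine ⟨fun k => ?_, fun k => ?_⟩ <;>
      have hk2 := hcoordZ k <;>
      simp only [boxLo, boxHi] <;> split_ifs <;> push_cast <;> omega
  have hmono : μ (ones (↑(Finset.Icc (boxLo a L (2 * L + 1) (d := d))
      (boxHi a L (2 * L + 1))) : Set (Site d))) ≤
      μ (ones {i : Site d | enormZ i ≤ (L : ℝ)}) := by
    apply measure_mono
    intro x hx i hi
    exact hx i (hsub hi)
  refine le_trans ?_ (le_trans hfinal hmono)
  -- numeric part:  exp(-(c(L^a+1))) ≤ ε^n
  have hcard : n ≤ 8 ^ a * (L ^ a + 1) := by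
    have hprod : n = ∏ k : Fin d, ((boxHi a L 1 (d := d) k + 1 - boxLo a L 1 k).toNat) := by
      rw [hn, Pi.card_Icc]
      congr 1; funext k; rw [Int.card_Icc]
    have hfac : ∀ k : Fin d, (boxHi a L 1 (d := d) k + 1 - boxLo a L 1 k).toNat
        = if (k : ℕ) < a then 4 * L + 1 else 1 := by
      intro k
      simp only [boxLo, boxHi]
      split_ifs <;> push_cast <;> omega
    have hcnt : (Finset.univ.filter fun k : Fin d => (k : ℕ) < a).card ≤ a := by
      have hmaps : Set.MapsTo (fun k : Fin d => (k : ℕ))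
          ↑(Finset.univ.filter fun k : Fin d => (k : ℕ) < a) ↑(Finset.range a) := by
        intro k hk
        simp only [Finset.coe_filter, Set.mem_setOf_eq] at hk
        simp only [Finset.coe_range, Set.mem_Iio]
        exact hk.2
      have := Finset.card_le_card_of_injOn (fun k : Fin d => (k : ℕ)) hmaps
        (fun k _ k' _ h => Fin.ext h)
      simpa using this
    calc n = ∏ k : Fin d, ((boxHi a L 1 (d := d) k + 1 - boxLo a L 1 k).toNat) := hprod
      _ = ∏ k : Fin d, (if (k : ℕ) < a then 4 * L + 1 else 1) := by
          exact Finset.prod_congr rfl fun k _ => hfac k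
      _ = (4 * L + 1) ^ (Finset.univ.filter fun k : Fin d => (k : ℕ) < a).card := by
          rw [← Finset.prod_filter, Finset.prod_const]
      _ ≤ (4 * L + 1) ^ a := Nat.pow_le_pow_right (by omega) hcnt
      _ ≤ 8 ^ a * (L ^ a + 1) := nat_ineq a L
  set N : ℕ := 8 ^ a * (L ^ a + 1) with hN
  have hpow : (ENNReal.ofReal ε) ^ N ≤ (ENNReal.ofReal ε) ^ n :=
    pow_le_pow_of_le_one zero_le (ENNReal.ofReal_le_one.mpr hε1) hcard
  refine le_trans ?_ hpow
  rw [← ENNReal.ofReal_pow hε.le]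
  apply ENNReal.ofReal_le_ofReal
  have hεN : ε ^ N = Real.exp ((N : ℝ) * Real.log ε) := by
    rw [Real.exp_nat_mul, Real.exp_log hε]
  rw [hεN]
  apply Real.exp_le_exp.mpr
  have hX : ((N : ℝ)) = 8 ^ a * ((L : ℝ) ^ a + 1) := by
    rw [hN]; push_cast; ring
  have hXpos : (0 : ℝ) ≤ (L : ℝ) ^ a + 1 := by positivity
  rw [hX]
  nlinarith [mul_nonneg hXpos hlog, mul_nonneg (pow_nonneg (by norm_num : (0:ℝ) ≤ 8) a) (mul_nonneg hXpos hlog)]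
end CAPaper
end
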